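/- Let N ≥ 2, 1 ≤ C < N, and p ∈ Δ_N°. Let A_1,…,A_N be independent random variables with A_i exponentially distributed with rate p_i, and let S_C denote the (almost surely well-defined) set of the C indices with the smallest values among A_1,…,A_N. Then E[ Σ_{i ∈ S_C} p_i ] = Σ_{m=L}^{N} (−1)^{m−L} binom(m−2, m−L) Σ_{R ⊆ {1,…,N}, |R| = m} (Σ_{i∈R} p_i²)/p_R, where L = N − C + 1. -/

import Mathlib

open Finset MeasureTheory ProbabilityTheory Real Set

lemma expMeasure_apply (r : ℝ) {s : Set ℝ} (hs : MeasurableSet s) :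
    expMeasure r s = ∫⁻ x in s, exponentialPDF r x := by
  rw [expMeasure, gammaMeasure, withDensity_apply _ hs]; rfl

lemma expMeasure_Ioi {r : ℝ} (hr : 0 < r) (t : ℝ) :
    expMeasure r (Set.Ioi t) = ENNReal.ofReal (rexp (-(r * max t 0))) := by
  have huniv : expMeasure r Set.univ = 1 := by
    rw [expMeasure_apply r MeasurableSet.univ, Measure.restrict_univ,
      lintegral_exponentialPDF_eq_one hr]
  have hIic : expMeasure r (Set.Iic t)
      = ENNReal.ofReal (if 0 ≤ t then 1 - rexp (-(r * t)) else 0) := by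
    rw [expMeasure_apply r measurableSet_Iic, lintegral_exponentialPDF_eq_antiDeriv hr]
  have : Set.Ioi t = (Set.Iic t)ᶜ := by simp
  rw [this, measure_compl measurableSet_Iic (by simp [hIic]), huniv, hIic]
  split_ifs with h
  · have hle : rexp (-(r*t)) ≤ 1 := by
      rw [exp_le_one_iff]; nlinarith
    rw [max_eq_left h, ← ENNReal.ofReal_one, ← ENNReal.ofReal_sub _ (by linarith)]
    congr 1; ring_nf
  · rw [max_eq_right (le_of_lt (not_le.mp h)), ENNReal.ofReal_zero, tsub_zero, mul_zero,
      neg_zero, exp_zero, ENNReal.ofReal_one]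

lemma lintegral_exponentialPDF_mul_exp {r s : ℝ} (hr : 0 < r) (hs : 0 ≤ s) :
    ∫⁻ t, exponentialPDF r t * ENNReal.ofReal (rexp (-(s * max t 0)))
      = ENNReal.ofReal (r / (r + s)) := by
  have hrs : 0 < r + s := by linarith
  have hpt : ∀ t : ℝ, exponentialPDF r t * ENNReal.ofReal (rexp (-(s * max t 0)))
      = ENNReal.ofReal (r / (r + s)) * exponentialPDF (r + s) t := by
    intro t
    rcases le_or_gt 0 t with h | h
    · rw [exponentialPDF_of_nonneg h, exponentialPDF_of_nonneg h, max_eq_left h,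
        ← ENNReal.ofReal_mul (by positivity), ← ENNReal.ofReal_mul (by positivity)]
      congr 1
      have h1 : r * rexp (-(r * t)) * rexp (-(s * t)) = r * rexp (-((r+s) * t)) := by
        rw [mul_assoc, ← Real.exp_add]; ring_nf
      rw [h1]; field_simp
    · rw [exponentialPDF_of_neg h, exponentialPDF_of_neg h, zero_mul, mul_zero]
  simp_rw [hpt]
  have hm : Measurable (exponentialPDF (r+s)) :=
    (measurable_exponentialPDFReal (r+s)).ennreal_ofReal
  rw [lintegral_const_mul _ hm, lintegral_exponentialPDF_eq_one hrs, mul_one]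

lemma prob_lt_all
    {Ω : Type*} [MeasureSpace Ω] [IsProbabilityMeasure (ℙ : Measure Ω)]
    {N : ℕ} (p : Fin N → ℝ) (hppos : ∀ i, 0 < p i)
    (A : Fin N → Ω → ℝ) (hA : ∀ i, Measurable (A i))
    (hindep : iIndepFun A ℙ)
    (hlaw : ∀ i, Measure.map (A i) ℙ = expMeasure (p i))
    (i : Fin N) (T : Finset (Fin N)) (hiT : i ∉ T) :
    ℙ {ω | ∀ j ∈ T, A i ω < A j ω}
      = ENNReal.ofReal (p i / (p i + ∑ j ∈ T, p j)) := by
  set s : ℝ := ∑ j ∈ T, p j with hs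
  have hs0 : 0 ≤ s := Finset.sum_nonneg fun j _ => (hppos j).le
  set W : Ω → (↥T → ℝ) := fun ω j => A j ω with hWdef
  have hW : Measurable W := measurable_pi_lambda _ fun j => hA j
  -- independence of A i and W
  have hInd0 := hindep.indepFun_finset {i} T (Finset.disjoint_singleton_left.mpr hiT) hA
  have hInd : IndepFun (A i) W ℙ := by
    have : A i = (fun g : (↥({i} : Finset (Fin N)) → ℝ) =>
        g ⟨i, Finset.mem_singleton_self i⟩) ∘ (fun a (k : ↥({i} : Finset (Fin N))) => A k a) := rfl
    rw [this]
    exact hInd0.comp (measurable_pi_apply _) measurable_id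
  set ν : Measure (↥T → ℝ) := Measure.map W ℙ with hν
  have : IsProbabilityMeasure ν := Measure.isProbabilityMeasure_map hW.aemeasurable
  have hmap : Measure.map (fun ω => (A i ω, W ω)) ℙ = (expMeasure (p i)).prod ν := by
    rw [← hlaw i]
    exact (indepFun_iff_map_prod_eq_prod_map_map (hA i).aemeasurable hW.aemeasurable).mp hInd
  set Eset : Set (ℝ × (↥T → ℝ)) := {q | ∀ j, q.1 < q.2 j} with hEdef
  have hEset : MeasurableSet Eset := by
    have : Eset = ⋂ j, {q : ℝ × (↥T → ℝ) | q.1 < q.2 j} := by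
      ext q; simp [hEdef]
    rw [this]
    exact MeasurableSet.iInter fun j =>
      measurableSet_lt measurable_fst ((measurable_pi_apply j).comp measurable_snd)
  have hpre : {ω | ∀ j ∈ T, A i ω < A j ω} = (fun ω => (A i ω, W ω)) ⁻¹' Eset := by
    ext ω
    simp only [Set.mem_setOf_eq, Set.mem_preimage, hEdef, hWdef, Subtype.forall]
  have hslice : ∀ t : ℝ, ν (Prod.mk t ⁻¹' Eset) = ENNReal.ofReal (rexp (-(s * max t 0))) := by
    intro t
    have h1 : Prod.mk t ⁻¹' Eset = {y : ↥T → ℝ | ∀ j, t < y j} := rfl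
    have h2 : MeasurableSet {y : ↥T → ℝ | ∀ j : ↥T, t < y j} := by
      have : {y : ↥T → ℝ | ∀ j, t < y j} = ⋂ j, {y : ↥T → ℝ | t < y j} := by ext; simp
      rw [this]
      exact MeasurableSet.iInter fun j =>
        measurableSet_lt measurable_const (measurable_pi_apply j)
    have h3 : W ⁻¹' {y : ↥T → ℝ | ∀ j, t < y j} = ⋂ j ∈ T, A j ⁻¹' Set.Ioi t := by
      ext ω; simp [hWdef, Subtype.forall]
    rw [h1, hν, Measure.map_apply hW h2, h3,
      hindep.meas_biInter (fun j _ => ⟨Set.Ioi t, measurableSet_Ioi, rfl⟩)]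
    have h4 : ∀ j ∈ T, ℙ (A j ⁻¹' Set.Ioi t) = ENNReal.ofReal (rexp (-(p j * max t 0))) := by
      intro j _
      rw [← Measure.map_apply (hA j) measurableSet_Ioi, hlaw j, expMeasure_Ioi (hppos j)]
    rw [Finset.prod_congr rfl h4, ← ENNReal.ofReal_prod_of_nonneg (fun j _ => (exp_pos _).le),
      ← Real.exp_sum]
    congr 2
    rw [Finset.sum_neg_distrib, hs, Finset.sum_mul]
  have hmeas_pair : Measurable (fun ω => (A i ω, W ω)) := (hA i).prodMk hW
  rw [hpre, ← Measure.map_apply hmeas_pair hEset, hmap, Measure.prod_apply hEset]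
  calc ∫⁻ t, ν (Prod.mk t ⁻¹' Eset) ∂(expMeasure (p i))
      = ∫⁻ t, ENNReal.ofReal (rexp (-(s * max t 0))) ∂(expMeasure (p i)) := by
        exact lintegral_congr hslice
    _ = ∫⁻ t, exponentialPDF (p i) t * ENNReal.ofReal (rexp (-(s * max t 0))) := by
        have hf : Measurable (gammaPDF 1 (p i)) := (measurable_gammaPDFReal 1 (p i)).ennreal_ofReal
        have hg : Measurable fun t : ℝ => ENNReal.ofReal (rexp (-(s * max t 0))) := by fun_prop
        rw [expMeasure, gammaMeasure, lintegral_withDensity_eq_lintegral_mul _ hf hg]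
        rfl
    _ = ENNReal.ofReal (p i / (p i + s)) := lintegral_exponentialPDF_mul_exp (hppos i) hs0

lemma expMeasure_singleton {r : ℝ} (t : ℝ) : expMeasure r {t} = 0 := by
  rw [expMeasure_apply r (measurableSet_singleton t)]
  exact setLIntegral_measure_zero _ _ (measure_singleton t)

lemma prob_tie_zero
    {Ω : Type*} [MeasureSpace Ω] [IsProbabilityMeasure (ℙ : Measure Ω)]
    {N : ℕ} (p : Fin N → ℝ)
    (A : Fin N → Ω → ℝ) (hA : ∀ i, Measurable (A i))
    (hindep : iIndepFun A ℙ)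
    (hlaw : ∀ i, Measure.map (A i) ℙ = expMeasure (p i))
    (i j : Fin N) (hij : j ≠ i) :
    ℙ {ω | A j ω = A i ω} = 0 := by
  have hInd : IndepFun (A j) (A i) ℙ := hindep.indepFun hij
  have hmap : Measure.map (fun ω => (A j ω, A i ω)) ℙ
      = (expMeasure (p j)).prod (expMeasure (p i)) := by
    rw [← hlaw j, ← hlaw i]
    exact (indepFun_iff_map_prod_eq_prod_map_map (hA j).aemeasurable
      (hA i).aemeasurable).mp hInd
  have : IsProbabilityMeasure (expMeasure (p i)) := by
    rw [← hlaw i]; exact Measure.isProbabilityMeasure_map (hA i).aemeasurable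
  have hD : MeasurableSet {q : ℝ × ℝ | q.1 = q.2} :=
    measurableSet_eq_fun measurable_fst measurable_snd
  have hpre : {ω | A j ω = A i ω} = (fun ω => (A j ω, A i ω)) ⁻¹' {q : ℝ × ℝ | q.1 = q.2} := rfl
  rw [hpre, ← Measure.map_apply ((hA j).prodMk (hA i)) hD, hmap, Measure.prod_apply hD]
  have : ∀ x : ℝ, expMeasure (p i) (Prod.mk x ⁻¹' {q : ℝ × ℝ | q.1 = q.2}) = 0 := by
    intro x
    have : Prod.mk x ⁻¹' {q : ℝ × ℝ | q.1 = q.2} = {x} := by ext y; simp [eq_comm]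
    rw [this, expMeasure_singleton]
  simp only [this]
  simp [expMeasure_singleton]

lemma alt_real {n : ℕ} (h0 : n ≠ 0) :
    ∑ r ∈ Finset.range (n + 1), (-1 : ℝ) ^ r * (n.choose r : ℝ) = 0 := by
  have := Int.alternating_sum_range_choose_of_ne h0
  have := congrArg (fun z : ℤ => (z : ℝ)) this
  push_cast at this
  simpa using this

lemma trinom (s K r : ℕ) (hK : 1 ≤ K) :
    ((s.choose (K - 1 + r) : ℝ)) * ((K - 1 + r).choose r : ℝ)
      = (s.choose (K - 1) : ℝ) * ((s - (K - 1)).choose r : ℝ) := by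
  have h1 : (K - 1 + r).choose r = (K - 1 + r).choose (K - 1) := by
    exact Nat.choose_symm_of_eq_add (by omega)
  rw [h1]
  rcases le_or_gt (K - 1 + r) s with h | h
  · have := Nat.choose_mul (n := s) (Nat.le_add_right (K - 1) r)
    have h2 : (K - 1 + r) - (K - 1) = r := by omega
    rw [h2] at this
    exact_mod_cast congrArg (fun z : ℕ => (z : ℝ)) this
  · have hL : s.choose (K - 1 + r) = 0 := Nat.choose_eq_zero_of_lt h
    rcases le_or_gt (K - 1) s with h' | h'
    · have hR : (s - (K - 1)).choose r = 0 := Nat.choose_eq_zero_of_lt (by omega)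
      simp [hL, hR]
    · have hR : s.choose (K - 1) = 0 := Nat.choose_eq_zero_of_lt h'
      simp [hL, hR]

lemma bonf_core (K : ℕ) (hK : 1 ≤ K) : ∀ s : ℕ, K ≤ s →
    ∑ m ∈ Finset.Icc K s, (-1 : ℝ) ^ (m - K) * ((m - 1).choose (m - K) : ℝ) * (s.choose m : ℝ)
      = 1 := by
  refine Nat.le_induction ?_ ?_
  · rw [Finset.Icc_self, Finset.sum_singleton]
    simp
  · intro s hKs IH
    have hIcc : Finset.Icc K (s + 1) = insert (s + 1) (Finset.Icc K s) := by
      exact (Finset.insert_Icc_right_eq_Icc_add_one (by omega)).symm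
    have hsplit : ∀ m ∈ Finset.Icc K (s + 1),
        ((s + 1).choose m : ℝ) = (s.choose m : ℝ) + (s.choose (m - 1) : ℝ) := by
      intro m hm
      rw [Finset.mem_Icc] at hm
      have h1 : m - 1 + 1 = m := by omega
      have := Nat.choose_succ_succ' s (m - 1)
      rw [h1] at this
      rw [this]; push_cast; ring
    calc ∑ m ∈ Finset.Icc K (s + 1), (-1:ℝ)^(m-K) * ((m-1).choose (m-K) : ℝ) * ((s+1).choose m : ℝ)
        = (∑ m ∈ Finset.Icc K (s + 1), (-1:ℝ)^(m-K) * ((m-1).choose (m-K) : ℝ) * (s.choose m : ℝ))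
          + ∑ m ∈ Finset.Icc K (s + 1), (-1:ℝ)^(m-K) * ((m-1).choose (m-K) : ℝ) * (s.choose (m-1) : ℝ) := by
          rw [← Finset.sum_add_distrib]
          refine Finset.sum_congr rfl fun m hm => ?_
          rw [hsplit m hm]; ring
      _ = 1 + 0 := by
          congr 1
          · rw [hIcc, Finset.sum_insert (by simp),
              Nat.choose_eq_zero_of_lt (Nat.lt_succ_self s)]
            simpa using IH
          · -- the alternating part vanishes
            have hre : ∑ m ∈ Finset.Icc K (s + 1), (-1:ℝ)^(m-K) * ((m-1).choose (m-K) : ℝ) * (s.choose (m-1) : ℝ)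
                = ∑ r ∈ Finset.range (s + 2 - K), (-1:ℝ)^r * ((K + r - 1).choose r : ℝ) * (s.choose (K + r - 1) : ℝ) := by
              rw [← Finset.Ico_add_one_right_eq_Icc, Finset.sum_Ico_eq_sum_range]
              refine Finset.sum_congr rfl fun r _ => ?_
              have h1 : K + r - K = r := by omega
              rw [h1]
            have hterm : ∀ r : ℕ, (-1:ℝ)^r * ((K + r - 1).choose r : ℝ) * (s.choose (K + r - 1) : ℝ)
                = (s.choose (K-1) : ℝ) * ((-1:ℝ)^r * ((s - (K-1)).choose r : ℝ)) := by
              intro r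
              have h3 : K + r - 1 = K - 1 + r := by omega
              rw [h3, mul_assoc, mul_comm ((K - 1 + r).choose r : ℝ), trinom s K r hK]
              ring
            rw [hre]
            simp_rw [hterm]
            rw [← Finset.mul_sum]
            have h4 : s + 2 - K = (s - (K - 1)) + 1 := by omega
            rw [h4, alt_real (by omega), mul_zero]
      _ = 1 := by ring

lemma bonf (K n s : ℕ) (hK : 1 ≤ K) (hsn : s ≤ n) :
    (if K ≤ s then (1:ℝ) else 0)
      = ∑ m ∈ Finset.Icc K n, (-1 : ℝ) ^ (m - K) * ((m - 1).choose (m - K) : ℝ)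
          * (s.choose m : ℝ) := by
  split_ifs with h
  · rw [← Finset.sum_subset (Finset.Icc_subset_Icc_right hsn)
      (fun m hm hm' => by
        have : s < m := by
          simp only [Finset.mem_Icc] at hm hm'; omega
        rw [Nat.choose_eq_zero_of_lt this]; push_cast; ring)]
    exact (bonf_core K hK s h).symm
  · symm
    refine Finset.sum_eq_zero fun m hm => ?_
    have : s < m := by simp only [Finset.mem_Icc] at hm; omega
    rw [Nat.choose_eq_zero_of_lt this]; push_cast; ring

lemma indicator_expand {N C : ℕ} (hN : 2 ≤ N) (hC1 : 1 ≤ C) (hCN : C < N)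
    (x : Fin N → ℝ) (i : Fin N) (hties : ∀ j, j ≠ i → x j ≠ x i) :
    (if (Finset.univ.filter fun j => x j < x i).card < C then (1:ℝ) else 0)
      = ∑ m ∈ Finset.Icc (N - C) (N - 1),
          (-1 : ℝ) ^ (m - (N - C)) * ((m - 1).choose (m - (N - C)) : ℝ) *
            ∑ T ∈ (Finset.univ.erase i).powersetCard m,
              ∏ j ∈ T, (if x i < x j then (1:ℝ) else 0) := by
  set G : Finset (Fin N) := (Finset.univ.erase i).filter (fun j => x i < x j) with hG
  have hGsub : G ⊆ Finset.univ.erase i := Finset.filter_subset _ _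
  -- inner sums are binomial coefficients
  have hinner : ∀ m, ∑ T ∈ (Finset.univ.erase i).powersetCard m,
      ∏ j ∈ T, (if x i < x j then (1:ℝ) else 0) = (G.card.choose m : ℝ) := by
    intro m
    have h1 : ∀ T ∈ (Finset.univ.erase i).powersetCard m,
        ∏ j ∈ T, (if x i < x j then (1:ℝ) else 0)
          = if (∀ j ∈ T, x i < x j) then (1:ℝ) else 0 := fun T _ => by
      classical
      convert Finset.prod_boole (s := T) (p := fun j => x i < x j) using 2
    rw [Finset.sum_congr rfl h1, Finset.sum_boole]
    have h2 : ((Finset.univ.erase i).powersetCard m).filter (fun T => ∀ j ∈ T, x i < x j)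
        = G.powersetCard m := by
      ext T
      simp only [Finset.mem_filter, Finset.mem_powersetCard, hG]
      constructor
      · rintro ⟨⟨hTsub, hTcard⟩, hall⟩
        exact ⟨fun j hj => Finset.mem_filter.mpr ⟨hTsub hj, hall j hj⟩, hTcard⟩
      · rintro ⟨hTsub, hTcard⟩
        refine ⟨⟨fun j hj => (Finset.mem_filter.mp (hTsub hj)).1, hTcard⟩,
          fun j hj => (Finset.mem_filter.mp (hTsub hj)).2⟩
    rw [h2, Finset.card_powersetCard]
  simp_rw [hinner]
  -- relate the two cardinalities
  have htri : ∀ j ∈ Finset.univ.erase i, x j < x i ∨ x i < x j := by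
    intro j hj
    rcases lt_trichotomy (x j) (x i) with h | h | h
    · exact Or.inl h
    · exact absurd h (hties j (Finset.mem_erase.mp hj).1)
    · exact Or.inr h
  have hsmall : Finset.univ.filter (fun j => x j < x i)
      = (Finset.univ.erase i).filter (fun j => x j < x i) := by
    ext j
    constructor
    · intro hj
      rw [Finset.mem_filter] at hj ⊢
      refine ⟨Finset.mem_erase.mpr ⟨?_, Finset.mem_univ j⟩, hj.2⟩
      intro hji; subst hji; exact lt_irrefl _ hj.2
    · intro hj
      rw [Finset.mem_filter] at hj ⊢
      exact ⟨Finset.mem_univ j, hj.2⟩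
  have hpart : ((Finset.univ.erase i).filter (fun j => x j < x i)).card + G.card = N - 1 := by
    have hfilt : (Finset.univ.erase i).filter (fun j => ¬ x j < x i) = G := by
      ext j
      simp only [Finset.mem_filter, hG]
      constructor
      · rintro ⟨hj, hnot⟩
        refine ⟨hj, ?_⟩
        rcases htri j hj with h | h
        · exact absurd h hnot
        · exact h
      · rintro ⟨hj, h⟩
        exact ⟨hj, lt_asymm h⟩
    rw [← hfilt, Finset.card_filter_add_card_filter_not,
      Finset.card_erase_of_mem (Finset.mem_univ i), Finset.card_univ, Fintype.card_fin]
  have hiff : ((Finset.univ.filter fun j => x j < x i).card < C) ↔ (N - C ≤ G.card) := by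
    rw [hsmall]
    omega
  rw [if_congr hiff rfl rfl]
  exact bonf (N - C) (N - 1) G.card (by omega) (by omega)

lemma per_index
    {Ω : Type*} [MeasureSpace Ω] [IsProbabilityMeasure (ℙ : Measure Ω)]
    {N C : ℕ} (hN : 2 ≤ N) (hC1 : 1 ≤ C) (hCN : C < N)
    (p : Fin N → ℝ) (hppos : ∀ i, 0 < p i)
    (A : Fin N → Ω → ℝ) (hA : ∀ i, Measurable (A i))
    (hindep : iIndepFun A ℙ)
    (hlaw : ∀ i, Measure.map (A i) ℙ = expMeasure (p i)) (i : Fin N) :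
    ∫ ω, (if (Finset.univ.filter fun j => A j ω < A i ω).card < C then (1:ℝ) else 0) ∂ℙ
      = ∑ m ∈ Finset.Icc (N - C) (N - 1),
          (-1 : ℝ) ^ (m - (N - C)) * ((m - 1).choose (m - (N - C)) : ℝ) *
            ∑ T ∈ (Finset.univ.erase i).powersetCard m,
              p i / (p i + ∑ j ∈ T, p j) := by
  -- a.e. no ties with index i
  have hae : ∀ᵐ ω ∂ℙ, ∀ j, j ≠ i → A j ω ≠ A i ω := by
    rw [ae_all_iff]
    intro j
    by_cases hj : j = i
    · filter_upwards with ω h; exact absurd hj h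
    · have h0 := prob_tie_zero p A hA hindep hlaw i j hj
      rw [ae_iff]
      have he : {ω | ¬ (j ≠ i → A j ω ≠ A i ω)} = {ω | A j ω = A i ω} := by
        ext ω; simp [hj]
      rw [he]
      exact h0
  have hstep1 : ∫ ω, (if (Finset.univ.filter fun j => A j ω < A i ω).card < C then (1:ℝ) else 0) ∂ℙ
      = ∫ ω, (∑ m ∈ Finset.Icc (N - C) (N - 1),
          (-1 : ℝ) ^ (m - (N - C)) * ((m - 1).choose (m - (N - C)) : ℝ) *
            ∑ T ∈ (Finset.univ.erase i).powersetCard m,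
              ∏ j ∈ T, (if A i ω < A j ω then (1:ℝ) else 0)) ∂ℙ := by
    refine integral_congr_ae (hae.mono fun ω hω => ?_)
    exact indicator_expand hN hC1 hCN (fun j => A j ω) i hω
  rw [hstep1]
  -- indicator rewriting for products
  have hprodind : ∀ (T : Finset (Fin N)) (ω : Ω),
      (∏ j ∈ T, (if A i ω < A j ω then (1:ℝ) else 0))
        = Set.indicator {ω' | ∀ j ∈ T, A i ω' < A j ω'} (fun _ => (1:ℝ)) ω := by
    intro T ω
    classical
    rw [Set.indicator_apply]
    have : (∏ j ∈ T, (if A i ω < A j ω then (1:ℝ) else 0))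
        = if (∀ j ∈ T, A i ω < A j ω) then (1:ℝ) else 0 := by
      convert Finset.prod_boole (s := T) (p := fun j => A i ω < A j ω) using 2
    rw [this]
    congr 1
  have hmeasT : ∀ T : Finset (Fin N), MeasurableSet {ω' | ∀ j ∈ T, A i ω' < A j ω'} := by
    intro T
    have : {ω' | ∀ j ∈ T, A i ω' < A j ω'} = ⋂ j ∈ T, {ω' | A i ω' < A j ω'} := by
      ext; simp
    rw [this]
    exact MeasurableSet.biInter (Set.to_countable _)
      (fun j _ => measurableSet_lt (hA i) (hA j))
  have hintT : ∀ T : Finset (Fin N),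
      Integrable (fun ω => ∏ j ∈ T, (if A i ω < A j ω then (1:ℝ) else 0)) ℙ := by
    intro T
    have : (fun ω => ∏ j ∈ T, (if A i ω < A j ω then (1:ℝ) else 0))
        = Set.indicator {ω' | ∀ j ∈ T, A i ω' < A j ω'} (fun _ => (1:ℝ)) := by
      funext ω; exact hprodind T ω
    rw [this]
    exact (integrable_const (1:ℝ)).indicator (hmeasT T)
  rw [integral_finset_sum _ (fun m _ => by
    refine Integrable.const_mul ?_ _
    exact integrable_finset_sum _ (fun T _ => hintT T))]
  refine Finset.sum_congr rfl fun m hm => ?_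
  rw [integral_const_mul]
  congr 1
  rw [integral_finset_sum _ (fun T _ => hintT T)]
  refine Finset.sum_congr rfl fun T hT => ?_
  have hTsub : T ⊆ Finset.univ.erase i := (Finset.mem_powersetCard.mp hT).1
  have hiT : i ∉ T := fun h => (Finset.mem_erase.mp (hTsub h)).1 rfl
  have : ∫ ω, (∏ j ∈ T, (if A i ω < A j ω then (1:ℝ) else 0)) ∂ℙ
      = (ℙ {ω' | ∀ j ∈ T, A i ω' < A j ω'}).toReal := by
    simp_rw [hprodind]
    rw [integral_indicator_const _ (hmeasT T)]
    simp [Measure.real]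
  have hden : 0 < p i + ∑ j ∈ T, p j := by
    have : 0 ≤ ∑ j ∈ T, p j := Finset.sum_nonneg fun j _ => (hppos j).le
    linarith [hppos i]
  rw [this, prob_lt_all p hppos A hA hindep hlaw i T hiT,
    ENNReal.toReal_ofReal (div_nonneg (hppos i).le hden.le)]

lemma reindex_insert {N : ℕ} (m : ℕ) (F : Fin N → Finset (Fin N) → ℝ) :
    ∑ i : Fin N, ∑ T ∈ (Finset.univ.erase i).powersetCard m, F i (insert i T)
      = ∑ R ∈ (Finset.univ : Finset (Fin N)).powersetCard (m + 1), ∑ i ∈ R, F i R := by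
  classical
  rw [← Finset.sum_sigma (Finset.univ : Finset (Fin N))
    (fun i => (Finset.univ.erase i).powersetCard m) (fun q => F q.1 (insert q.1 q.2)),
    ← Finset.sum_sigma ((Finset.univ : Finset (Fin N)).powersetCard (m + 1))
    (fun R => R) (fun q => F q.2 q.1)]
  refine Finset.sum_nbij' (fun q => ⟨insert q.1 q.2, q.1⟩) (fun q => ⟨q.2, q.1.erase q.2⟩)
    ?_ ?_ ?_ ?_ ?_
  · rintro ⟨i, T⟩ hq
    simp only [Finset.mem_sigma, Finset.mem_powersetCard] at hq ⊢
    obtain ⟨-, hsub, hcard⟩ := hq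
    have hiT : i ∉ T := fun h => (Finset.mem_erase.mp (hsub h)).1 rfl
    refine ⟨⟨fun j _ => Finset.mem_univ j, ?_⟩, Finset.mem_insert_self i T⟩
    rw [Finset.card_insert_of_notMem hiT, hcard]
  · rintro ⟨R, i⟩ hq
    simp only [Finset.mem_sigma, Finset.mem_powersetCard] at hq ⊢
    obtain ⟨⟨-, hcard⟩, hiR⟩ := hq
    refine ⟨Finset.mem_univ i, fun j hj => ?_, ?_⟩
    · rw [Finset.mem_erase]
      exact ⟨(Finset.mem_erase.mp hj).1, Finset.mem_univ j⟩
    · rw [Finset.card_erase_of_mem hiR, hcard]; omega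
  · rintro ⟨i, T⟩ hq
    simp only [Finset.mem_sigma, Finset.mem_powersetCard] at hq
    obtain ⟨-, hsub, -⟩ := hq
    have hiT : i ∉ T := fun h => (Finset.mem_erase.mp (hsub h)).1 rfl
    simp [Finset.erase_insert hiT]
  · rintro ⟨R, i⟩ hq
    simp only [Finset.mem_sigma, Finset.mem_powersetCard] at hq
    obtain ⟨-, hiR⟩ := hq
    simp [Finset.insert_erase hiR]
  · rintro ⟨i, T⟩ hq
    rfl

lemma algebra_step {N C : ℕ} (hN : 2 ≤ N) (hC1 : 1 ≤ C) (hCN : C < N)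
    (p : Fin N → ℝ) (hppos : ∀ i, 0 < p i) :
    ∑ i : Fin N, p i * ∑ m ∈ Finset.Icc (N - C) (N - 1),
        (-1 : ℝ) ^ (m - (N - C)) * ((m - 1).choose (m - (N - C)) : ℝ) *
          ∑ T ∈ (Finset.univ.erase i).powersetCard m, p i / (p i + ∑ j ∈ T, p j)
      = ∑ m ∈ Finset.Icc (N - C + 1) N,
          (-1 : ℝ) ^ (m - (N - C + 1)) * ((m - 2).choose (m - (N - C + 1)) : ℝ) *
            ∑ R ∈ (Finset.univ : Finset (Fin N)).powersetCard m,
              (∑ i ∈ R, p i ^ 2) / (∑ i ∈ R, p i) := by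
  classical
  have hKC : 1 ≤ N - C := by omega
  calc ∑ i : Fin N, p i * ∑ m ∈ Finset.Icc (N - C) (N - 1),
        (-1 : ℝ) ^ (m - (N - C)) * ((m - 1).choose (m - (N - C)) : ℝ) *
          ∑ T ∈ (Finset.univ.erase i).powersetCard m, p i / (p i + ∑ j ∈ T, p j)
      = ∑ m ∈ Finset.Icc (N - C) (N - 1),
          (-1 : ℝ) ^ (m - (N - C)) * ((m - 1).choose (m - (N - C)) : ℝ) *
            ∑ i : Fin N, ∑ T ∈ (Finset.univ.erase i).powersetCard m,
              p i ^ 2 / (∑ j ∈ insert i T, p j) := by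
        simp_rw [Finset.mul_sum]
        rw [Finset.sum_comm]
        refine Finset.sum_congr rfl fun m _ => Finset.sum_congr rfl fun i _ =>
          Finset.sum_congr rfl fun T hT => ?_
        have hsub : T ⊆ Finset.univ.erase i := (Finset.mem_powersetCard.mp hT).1
        have hiT : i ∉ T := fun h => (Finset.mem_erase.mp (hsub h)).1 rfl
        rw [Finset.sum_insert hiT]
        have hpos : 0 < p i + ∑ j ∈ T, p j := by
          have : 0 ≤ ∑ j ∈ T, p j := Finset.sum_nonneg fun j _ => (hppos j).le
          linarith [hppos i]
        field_simp
    _ = ∑ m ∈ Finset.Icc (N - C) (N - 1),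
          (-1 : ℝ) ^ (m - (N - C)) * ((m - 1).choose (m - (N - C)) : ℝ) *
            ∑ R ∈ (Finset.univ : Finset (Fin N)).powersetCard (m + 1),
              (∑ i ∈ R, p i ^ 2) / (∑ i ∈ R, p i) := by
        refine Finset.sum_congr rfl fun m _ => ?_
        congr 1
        rw [reindex_insert m (fun i R => p i ^ 2 / (∑ j ∈ R, p j))]
        refine Finset.sum_congr rfl fun R _ => ?_
        rw [Finset.sum_div]
    _ = ∑ m ∈ Finset.Icc (N - C + 1) N,
          (-1 : ℝ) ^ (m - (N - C + 1)) * ((m - 2).choose (m - (N - C + 1)) : ℝ) *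
            ∑ R ∈ (Finset.univ : Finset (Fin N)).powersetCard m,
              (∑ i ∈ R, p i ^ 2) / (∑ i ∈ R, p i) := by
        refine Finset.sum_nbij' (fun m => m + 1) (fun m => m - 1) ?_ ?_ ?_ ?_ ?_
        · intro m hm; simp only [Finset.mem_Icc] at hm ⊢; omega
        · intro m hm; simp only [Finset.mem_Icc] at hm ⊢; omega
        · intro m _; show m + 1 - 1 = m; omega
        · intro m hm; simp only [Finset.mem_Icc] at hm; show m - 1 + 1 = m; omega
        · intro m hm
          simp only [Finset.mem_Icc] at hm
          have h1 : m + 1 - (N - C + 1) = m - (N - C) := by omega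
          have h2 : m + 1 - 2 = m - 1 := by omega
          rw [h1, h2]

/-- Residual-subset expansion of the exact stationary LRU hit rate: if
`A_1,…,A_N` are independent exponential random variables with rates
`p_1,…,p_N` and `S_C` is the (a.s. well-defined) set of the `C` indices with
smallest values — i.e. `i ∈ S_C` iff fewer than `C` of the `A_j` are smaller
than `A_i` — then `E[Σ_{i∈S_C} p_i]` equals
`Σ_{m=L}^N (-1)^{m-L} binom(m-2,m-L) Σ_{|R|=m} (Σ_{i∈R} p_i²)/p_R`
with `L = N - C + 1`. -/
theorem hitRate_residual_formula
    {Ω : Type*} [MeasureSpace Ω] [IsProbabilityMeasure (ℙ : Measure Ω)]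
    (N C : ℕ) (hN : 2 ≤ N) (hC1 : 1 ≤ C) (hCN : C < N)
    (p : Fin N → ℝ) (hppos : ∀ i, 0 < p i) (hpsum : ∑ i, p i = 1)
    (A : Fin N → Ω → ℝ) (hA : ∀ i, Measurable (A i))
    (hindep : iIndepFun A ℙ)
    (hlaw : ∀ i, Measure.map (A i) ℙ = expMeasure (p i)) :
    (∫ ω, (∑ i ∈ Finset.univ.filter
        (fun i => ((Finset.univ.filter fun j => A j ω < A i ω).card < C)), p i) ∂ℙ) =
      ∑ m ∈ Finset.Icc (N - C + 1) N,
        (-1 : ℝ) ^ (m - (N - C + 1)) * ((m - 2).choose (m - (N - C + 1)) : ℝ) *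
          ∑ R ∈ (Finset.univ : Finset (Fin N)).powersetCard m,
            (∑ i ∈ R, p i ^ 2) / (∑ i ∈ R, p i) := by
  classical
  have hDi : ∀ i : Fin N,
      MeasurableSet {ω | (Finset.univ.filter fun j => A j ω < A i ω).card < C} := by
    intro i
    have hf : Measurable (fun ω => ∑ j : Fin N, if A j ω < A i ω then 1 else 0 : Ω → ℕ) :=
      Finset.measurable_sum _ fun j _ =>
        Measurable.ite (measurableSet_lt (hA j) (hA i)) measurable_const measurable_const
    have heq : {ω | (Finset.univ.filter fun j => A j ω < A i ω).card < C}
        = (fun ω => ∑ j : Fin N, if A j ω < A i ω then 1 else 0) ⁻¹' Set.Iio C := by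
      ext ω
      simp only [Set.mem_setOf_eq, Set.mem_preimage, Set.mem_Iio]
      rw [Finset.card_filter]
    rw [heq]
    exact hf measurableSet_Iio
  have hint : ∀ i : Fin N, Integrable
      (fun ω => if (Finset.univ.filter fun j => A j ω < A i ω).card < C then p i else 0) ℙ := by
    intro i
    have heq : (fun ω => if (Finset.univ.filter fun j => A j ω < A i ω).card < C
          then p i else 0)
        = Set.indicator {ω | (Finset.univ.filter fun j => A j ω < A i ω).card < C}
            (fun _ => p i) := by
      funext ω; rw [Set.indicator_apply]; rfl
    rw [heq]
    exact (integrable_const (p i)).indicator (hDi i)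
  calc (∫ ω, (∑ i ∈ Finset.univ.filter
        (fun i => ((Finset.univ.filter fun j => A j ω < A i ω).card < C)), p i) ∂ℙ)
      = ∫ ω, (∑ i : Fin N,
          if (Finset.univ.filter fun j => A j ω < A i ω).card < C then p i else 0) ∂ℙ := by
        congr 1; funext ω; exact Finset.sum_filter _ _
    _ = ∑ i : Fin N, ∫ ω,
          (if (Finset.univ.filter fun j => A j ω < A i ω).card < C then p i else 0) ∂ℙ :=
        integral_finset_sum _ fun i _ => hint i
    _ = ∑ i : Fin N, p i * ∫ ω,
          (if (Finset.univ.filter fun j => A j ω < A i ω).card < C then (1:ℝ) else 0) ∂ℙ := by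
        refine Finset.sum_congr rfl fun i _ => ?_
        rw [← integral_const_mul]
        congr 1; funext ω
        by_cases h : (Finset.univ.filter fun j => A j ω < A i ω).card < C <;> simp [h]
    _ = ∑ i : Fin N, p i * ∑ m ∈ Finset.Icc (N - C) (N - 1),
          (-1 : ℝ) ^ (m - (N - C)) * ((m - 1).choose (m - (N - C)) : ℝ) *
            ∑ T ∈ (Finset.univ.erase i).powersetCard m, p i / (p i + ∑ j ∈ T, p j) := by
        refine Finset.sum_congr rfl fun i _ => ?_
        rw [per_index hN hC1 hCN p hppos A hA hindep hlaw i]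
    _ = _ := algebra_step hN hC1 hCN p hppos
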